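/- Heller bound for convolutional codes: Let F_q be a finite field with q elements, let G ∈ F_q[z]^{k×n} (1 ≤ k < n) be right invertible and minimal with row degrees ν_1,…,ν_k, complexity δ = ν_1 + … + ν_k, and memory m = max{ν_1,…,ν_k}, and let d = min{ wt(uG) : u ∈ F_q[z]^k, u ≠ 0 } be the free distance of the convolutional code generated by G. Then for every integer i with i ≥ 1 if km = δ, respectively i ≥ 0 if km > δ, one has d ≤ ⌊ n(m+i)·q^{k(m+i)-δ-1}·(q-1) / (q^{k(m+i)-δ} - 1) ⌋. -/
import Mathlib


open Polynomial Matrix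

/-- The weight of a vector of polynomials: the total number of nonzero coefficients
occurring in its polynomial entries. -/
def polyWt {F : Type*} [Field F] {n : ℕ} (v : Fin n → Polynomial F) : ℕ :=
  ∑ j, (v j).support.card

/-- The complexity of a polynomial generator matrix `G ∈ F[z]^{k×n}`:
the maximal degree of its `k×k` minors. -/
noncomputable def complexity {F : Type*} [Field F] {k n : ℕ}
    (G : Matrix (Fin k) (Fin n) (Polynomial F)) : ℕ :=
  Finset.univ.sup fun f : Fin k ↪ Fin n => ((G.submatrix id ⇑f).det).natDegree

/-- The `r`-th row degree of a polynomial matrix: the maximal degree of the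
polynomial entries in row `r`. -/
noncomputable def rowDeg {F : Type*} [Field F] {k n : ℕ}
    (G : Matrix (Fin k) (Fin n) (Polynomial F)) (r : Fin k) : ℕ :=
  Finset.univ.sup fun j => (G r j).natDegree

lemma aux_count {F V : Type*} [Field F] [Fintype F] [AddCommGroup V] [Module F V]
    [Fintype V] [DecidableEq F] (f : V →ₗ[F] F) {q K : ℕ}
    (hq : Fintype.card F = q) (hV : Fintype.card V = q ^ K) (hK : 1 ≤ K) :
    (Finset.univ.filter fun c => f c ≠ 0).card ≤ q ^ (K - 1) * (q - 1) := by
  classical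
  have hq1 : 1 ≤ q := by
    have : 0 < Fintype.card F := Fintype.card_pos
    omega
  have hker : Nat.card (LinearMap.ker f) = (Finset.univ.filter fun c => f c = 0).card := by
    rw [Nat.card_eq_fintype_card, Fintype.card_subtype]
    simp [LinearMap.mem_ker]
  have hquot : Nat.card V = Nat.card (LinearMap.ker f) * Nat.card (V ⧸ LinearMap.ker f) :=
    Submodule.card_eq_card_quotient_mul_card _
  have hrange : Nat.card (V ⧸ LinearMap.ker f) ≤ q := by
    rw [Nat.card_congr f.quotKerEquivRange.toEquiv]
    calc Nat.card (LinearMap.range f) ≤ Nat.card F :=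
          Nat.card_le_card_of_injective _ Subtype.val_injective
      _ = q := by rw [Nat.card_eq_fintype_card, hq]
  have hcV : Nat.card V = q ^ K := by rw [Nat.card_eq_fintype_card, hV]
  set a := (Finset.univ.filter fun c => f c = 0).card
  have ha : q ^ (K - 1) ≤ a := by
    have h1 : q ^ (K-1) * q = q ^ K := by
      rw [← pow_succ]; congr 1; omega
    nlinarith [hquot, hrange, hker, hcV]
  have hsplit : (Finset.univ.filter fun c => f c ≠ 0).card + a = q ^ K := by
    rw [← hV]
    have := Finset.card_filter_add_card_filter_not (s := (Finset.univ : Finset V))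
      (p := fun c => f c ≠ 0)
    simpa [a, not_not] using this
  have hqK : q ^ (K-1) * q = q ^ K := by rw [← pow_succ]; congr 1; omega
  have : q ^ (K-1) * (q - 1) = q ^ K - q ^ (K-1) := by
    rw [Nat.mul_sub, hqK, mul_one]
  omega


/-- **Heller bound for convolutional codes.**
Let `F_q` be a finite field with `q` elements, `G ∈ F_q[z]^{k×n}` (`1 ≤ k < n`)
right invertible and minimal with row degrees `ν`, complexity `δ = ∑ ν r`, memory
`m = max ν`, and let `d` be the free distance of the convolutional code generated
by `G`.  Then for every integer `i` (with `i ≥ 1` if `km = δ`, resp. `i ≥ 0` if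
`km > δ`) one has `d ≤ ⌊ n(m+i)·q^{k(m+i)-δ-1}·(q-1) / (q^{k(m+i)-δ} - 1) ⌋`. -/
theorem convolutional_heller_bound
    {F : Type*} [Field F] [Fintype F] {q k n : ℕ} (hq : Fintype.card F = q)
    (hk : 1 ≤ k) (hkn : k < n)
    (G : Matrix (Fin k) (Fin n) (Polynomial F))
    (hright : ∃ H : Matrix (Fin n) (Fin k) (Polynomial F), G * H = 1)
    (ν : Fin k → ℕ) (hν : ∀ r, ν r = rowDeg G r)
    (δ m : ℕ) (hδ : δ = ∑ r, ν r)
    (hminimal : complexity G = δ)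
    (hm : m = Finset.univ.sup ν)
    (d : ℕ)
    (hd : IsLeast {w : ℕ | ∃ u : Fin k → Polynomial F,
      u ≠ 0 ∧ w = polyWt (Matrix.vecMul u G)} d)
    (i : ℕ) (hi : k * m = δ → 1 ≤ i) :
    (d : ℤ) ≤ ⌊((n * (m + i) : ℕ) : ℚ) * (q : ℚ) ^ (k * (m + i) - δ - 1) * ((q : ℚ) - 1) /
        ((q : ℚ) ^ (k * (m + i) - δ) - 1)⌋ := by
  classical
  have hq2 : 2 ≤ q := by
    have : 1 < Fintype.card F := Fintype.one_lt_card
    omega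
  -- basic numerology
  have hνm : ∀ r, ν r ≤ m := fun r => hm ▸ Finset.le_sup (Finset.mem_univ r)
  set e : Fin k → ℕ := fun r => m + i - ν r with he
  have heν : ∀ r, e r + ν r = m + i := fun r =>
    Nat.sub_add_cancel ((hνm r).trans (Nat.le_add_right m i))
  have hδkm : δ ≤ k * m := by
    rw [hδ]
    calc ∑ r, ν r ≤ ∑ _r : Fin k, m := Finset.sum_le_sum fun r _ => hνm r
      _ = k * m := by simp [Finset.sum_const, mul_comm]
  have hK1 : δ + 1 ≤ k * (m + i) := by
    have h1 : k * (m + i) = k * m + k * i := by ring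
    rcases eq_or_lt_of_le hδkm with hkm | hkm
    · have hi1 : 1 ≤ i := hi hkm.symm
      have : 1 ≤ k * i := Nat.one_le_iff_ne_zero.2 (by positivity)
      omega
    · omega
  set K := k * (m + i) - δ with hKdef
  have hK : 1 ≤ K := by omega
  have hsume : ∑ r, e r = K := by
    have h1 : (∑ r, e r) + δ = k * (m + i) := by
      rw [hδ, ← Finset.sum_add_distrib]
      simp only [heν]
      simp [Finset.sum_const, mul_comm]
    omega
  -- the message space
  have hcardV : Fintype.card ((r : Fin k) → Fin (e r) → F) = q ^ K := by
    simp only [Fintype.card_pi, Fintype.card_fun, Fintype.card_fin, hq,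
      Finset.prod_const, Finset.card_univ]
    rw [Finset.prod_pow_eq_pow_sum, hsume]
  -- the truncation map
  set u : ((r : Fin k) → Fin (e r) → F) → Fin k → Polynomial F := fun c r => ∑ s : Fin (e r), C (c r s) * X ^ (s : ℕ)
    with hu
  have hucoeff : ∀ (c : (r : Fin k) → Fin (e r) → F) (r : Fin k) (s : Fin (e r)), (u c r).coeff (s : ℕ) = c r s := by
    intro c r s
    rw [hu]
    simp only [finset_sum_coeff, coeff_C_mul, coeff_X_pow]
    rw [Finset.sum_eq_single s] <;> simp +contextual [Fin.val_eq_val, eq_comm]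
  have huinj : ∀ c : ((r : Fin k) → Fin (e r) → F), u c = 0 → c = 0 := by
    intro c hc
    funext r s
    have := hucoeff c r s
    rw [hc] at this
    simpa using this.symm
  -- degree bound for truncated codewords
  have hdeg : ∀ (c : (r : Fin k) → Fin (e r) → F) (j : Fin n) (t : ℕ), m + i ≤ t → ((vecMul (u c) G) j).coeff t = 0 := by
    intro c j t ht
    have hvm : (vecMul (u c) G) j = ∑ r, u c r * G r j := by
      simp [Matrix.vecMul, dotProduct]
    rw [hvm, finset_sum_coeff]
    refine Finset.sum_eq_zero fun r _ => ?_
    by_cases hz : u c r = 0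
    · simp [hz]
    · have her : 1 ≤ e r := by
        by_contra h
        apply hz
        rw [hu]
        have h0 : e r = 0 := by omega
        haveI : IsEmpty (Fin (e r)) := by rw [h0]; infer_instance
        simp [Finset.univ_eq_empty]
      have h1 : (u c r).natDegree ≤ e r - 1 := by
        rw [hu]
        refine natDegree_sum_le_of_forall_le _ _ fun s _ => ?_
        exact (natDegree_C_mul_X_pow_le _ _).trans (by have := s.isLt; omega)
      have h2 : (G r j).natDegree ≤ ν r := by
        rw [hν r, rowDeg]
        exact Finset.le_sup (f := fun j' => (G r j').natDegree) (Finset.mem_univ j)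
      refine coeff_eq_zero_of_natDegree_lt ?_
      calc (u c r * G r j).natDegree ≤ (u c r).natDegree + (G r j).natDegree :=
            natDegree_mul_le
        _ ≤ (e r - 1) + ν r := Nat.add_le_add h1 h2
        _ < e r + ν r := by omega
        _ = m + i := heν r
        _ ≤ t := ht
  -- the coordinate functionals
  have hulin : ∀ (a : F) (c c' : (r : Fin k) → Fin (e r) → F), u (a • c + c') = a • u c + u c' := by
    intro a c c'
    funext r
    rw [hu]
    simp only [Pi.add_apply, Pi.smul_apply, Polynomial.smul_eq_C_mul]
    rw [Finset.mul_sum, ← Finset.sum_add_distrib]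
    refine Finset.sum_congr rfl fun s _ => ?_
    rw [smul_eq_mul, C_add, C_mul]
    ring
  set L : Fin n → Fin (m + i) → (((r : Fin k) → Fin (e r) → F) →ₗ[F] F) := fun j t =>
    { toFun := fun c => ((vecMul (u c) G) j).coeff (t : ℕ)
      map_add' := by
        intro c c'
        show ((vecMul (u (c + c')) G) j).coeff (t : ℕ) =
          ((vecMul (u c) G) j).coeff (t : ℕ) + ((vecMul (u c') G) j).coeff (t : ℕ)
        have : u (c + c') = u c + u c' := by
          have := hulin 1 c c'
          simpa using this
        rw [this, Matrix.add_vecMul]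
        simp
      map_smul' := by
        intro a c
        show ((vecMul (u (a • c)) G) j).coeff (t : ℕ) = a * ((vecMul (u c) G) j).coeff (t : ℕ)
        have : u (a • c) = a • u c := by
          have := hulin a c 0
          have h0 : u 0 = 0 := by
            funext r
            rw [hu]
            refine Finset.sum_eq_zero fun s _ => ?_
            show C ((0 : (r : Fin k) → Fin (e r) → F) r s) * X ^ (s:ℕ) = 0
            simp
          simpa [h0] using this
        rw [this, Matrix.smul_vecMul]
        simp } with hL
  -- weight identity
  have hwt : ∀ c : ((r : Fin k) → Fin (e r) → F), polyWt (vecMul (u c) G) =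
      ∑ j, ∑ t : Fin (m + i), if L j t c ≠ 0 then 1 else 0 := by
    intro c
    rw [polyWt]
    refine Finset.sum_congr rfl fun j _ => ?_
    have hsupp : ((vecMul (u c) G) j).support =
        (Finset.range (m + i)).filter fun t => ((vecMul (u c) G) j).coeff t ≠ 0 := by
      ext t
      simp only [mem_support_iff, Finset.mem_filter, Finset.mem_range]
      constructor
      · intro h
        refine ⟨?_, h⟩
        by_contra hlt
        exact h (hdeg c j t (by omega))
      · exact fun h => h.2
    rw [hsupp, Finset.card_filter]
    rw [Finset.sum_range fun t => if ((vecMul (u c) G) j).coeff t ≠ 0 then 1 else 0]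
    rfl
  -- the main count
  set T := Finset.univ.filter fun c : ((r : Fin k) → Fin (e r) → F) => c ≠ 0 with hT
  have hcardT : T.card = q ^ K - 1 := by
    rw [hT, Finset.filter_ne', Finset.card_erase_of_mem (Finset.mem_univ 0),
      Finset.card_univ, hcardV]
  have hdle : ∀ c ∈ T, d ≤ ∑ j, ∑ t : Fin (m + i), if L j t c ≠ 0 then 1 else 0 := by
    intro c hc
    rw [← hwt c]
    refine hd.2 ⟨u c, fun h => ?_, rfl⟩
    rw [hT, Finset.mem_filter] at hc
    exact hc.2 (huinj c h)
  have hmain : d * (q ^ K - 1) ≤ n * (m + i) * (q ^ (K - 1) * (q - 1)) := by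
    calc d * (q ^ K - 1) = ∑ _c ∈ T, d := by rw [Finset.sum_const, hcardT, smul_eq_mul, mul_comm]
      _ ≤ ∑ c ∈ T, ∑ j, ∑ t : Fin (m + i), if L j t c ≠ 0 then 1 else 0 :=
          Finset.sum_le_sum hdle
      _ = ∑ j, ∑ t : Fin (m + i), ∑ c ∈ T, if L j t c ≠ 0 then 1 else 0 := by
          rw [Finset.sum_comm]
          exact Finset.sum_congr rfl fun j _ => Finset.sum_comm
      _ ≤ ∑ _j : Fin n, ∑ _t : Fin (m + i), q ^ (K - 1) * (q - 1) := by
          refine Finset.sum_le_sum fun j _ => Finset.sum_le_sum fun t _ => ?_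
          rw [← Finset.card_filter]
          calc (T.filter fun c => L j t c ≠ 0).card
              ≤ (Finset.univ.filter fun c => L j t c ≠ 0).card :=
                Finset.card_le_card (Finset.filter_subset_filter _ (Finset.filter_subset _ _))
            _ ≤ q ^ (K - 1) * (q - 1) := aux_count (L j t) hq hcardV hK
      _ = n * (m + i) * (q ^ (K - 1) * (q - 1)) := by
          simp [Finset.sum_const, mul_assoc]
  -- conclude
  rw [Int.le_floor]
  have hKpos : (0 : ℚ) < (q : ℚ) ^ K - 1 := by
    have : (1 : ℚ) < (q : ℚ) ^ K := by
      have : (1:ℚ) < (q:ℚ) := by exact_mod_cast hq2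
      calc (1:ℚ) < (q:ℚ) := this
        _ ≤ (q:ℚ) ^ K := le_self_pow₀ (by linarith) (by omega)
    linarith
  rw [show ((d : ℤ) : ℚ) = (d : ℚ) by push_cast; ring, le_div_iff₀ hKpos]
  have hcast : (d : ℚ) * ((q:ℚ) ^ K - 1) ≤ (n * (m + i) : ℕ) * ((q:ℚ) ^ (K-1) * ((q:ℚ) - 1)) := by
    have h1 : ((d * (q ^ K - 1) : ℕ) : ℚ) ≤ ((n * (m + i) * (q ^ (K - 1) * (q - 1)) : ℕ) : ℚ) := by
      exact_mod_cast hmain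
    have hq1 : (1:ℕ) ≤ q ^ K := Nat.one_le_pow _ _ (by omega)
    push_cast [Nat.cast_sub hq1, Nat.cast_sub (by omega : (1:ℕ) ≤ q)] at h1
    convert h1 using 1 <;> push_cast <;> ring
  calc (d : ℚ) * ((q:ℚ) ^ (k * (m+i) - δ) - 1) = (d : ℚ) * ((q:ℚ) ^ K - 1) := by rw [hKdef]
    _ ≤ (n * (m + i) : ℕ) * ((q:ℚ) ^ (K-1) * ((q:ℚ) - 1)) := hcast
    _ = ((n * (m + i) : ℕ) : ℚ) * (q : ℚ) ^ (k * (m + i) - δ - 1) * ((q : ℚ) - 1) := by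
        rw [hKdef]; ring
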